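/- arXiv:2404.04446 — 4 statements merged into one kernel-verified Lean document; each statement's English description precedes it below -/
import Mathlib

section
/- For every ρ ∈ (−1, 1), the value θ = f(ρ) satisfies the quadratic constraint ρ²·κxx·κyy − κxy² = (ρ² − 1)·(2·θ·κxx·κxy − θ²·κxx²), and moreover κxy − θ·κxx has the same sign as ρ (it is positive when ρ > 0, negative when ρ < 0, and zero when ρ = 0). -/
/-- For every `ρ ∈ (−1, 1)`, the value `θ = f(ρ)` satisfies the quadratic
constraint `ρ²·κxx·κyy − κxy² = (ρ² − 1)·(2·θ·κxx·κxy − θ²·κxx²)`, and `κxy − θ·κxx` has the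
same sign as `ρ`. -/
theorem leakyIV_f_solves_quadratic
    (κxx κxy κyy : ℝ) (hκxx : 0 < κxx) (hdet : 0 < κxx * κyy - κxy ^ 2)
    (f : ℝ → ℝ)
    (hf : ∀ ρ : ℝ, f ρ =
      κxx⁻¹ * (κxy - Real.sqrt (κxx * κyy - κxy ^ 2) * (ρ / Real.sqrt (1 - ρ ^ 2)))) :
    ∀ ρ ∈ Set.Ioo (-1 : ℝ) 1,
      ρ ^ 2 * κxx * κyy - κxy ^ 2
          = (ρ ^ 2 - 1) * (2 * f ρ * κxx * κxy - (f ρ) ^ 2 * κxx ^ 2) ∧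
        (0 < ρ → 0 < κxy - f ρ * κxx) ∧
        (ρ < 0 → κxy - f ρ * κxx < 0) ∧
        (ρ = 0 → κxy - f ρ * κxx = 0) := by
  intro ρ hρ
  obtain ⟨h1, h2⟩ := hρ
  have hs2 : (0:ℝ) < 1 - ρ ^ 2 := by nlinarith
  have hs : 0 < Real.sqrt (1 - ρ ^ 2) := Real.sqrt_pos.mpr hs2
  have hd : 0 < Real.sqrt (κxx * κyy - κxy ^ 2) := Real.sqrt_pos.mpr hdet
  have hssq : Real.sqrt (1 - ρ ^ 2) ^ 2 = 1 - ρ ^ 2 := Real.sq_sqrt hs2.le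
  have hdsq : Real.sqrt (κxx * κyy - κxy ^ 2) ^ 2 = κxx * κyy - κxy ^ 2 :=
    Real.sq_sqrt hdet.le
  have key : κxy - f ρ * κxx
      = Real.sqrt (κxx * κyy - κxy ^ 2) * (ρ / Real.sqrt (1 - ρ ^ 2)) := by
    rw [hf ρ]; field_simp; ring
  refine ⟨?_, ?_, ?_, ?_⟩
  · have h : (κxy - f ρ * κxx) ^ 2 = (κxx * κyy - κxy ^ 2) * ρ ^ 2 / (1 - ρ ^ 2) := by
      rw [key, mul_pow, div_pow, hdsq, hssq]; ring
    have : 2 * f ρ * κxx * κxy - (f ρ) ^ 2 * κxx ^ 2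
        = κxy ^ 2 - (κxy - f ρ * κxx) ^ 2 := by ring
    rw [this, h]; field_simp; ring
  · intro hp; rw [key]; positivity
  · intro hn; rw [key]
    exact mul_neg_of_pos_of_neg hd (div_neg_of_neg_of_pos hn hs)
  · intro h0; rw [key, h0]; simp
end

section
/- Assume β ≠ 0 and 1 < p < ∞, and let θ* ∈ ℝ. If g_p(θ*) = τ̌_p (the true leakage coincides with the minimum leakage consistent with the data), then θ* is the unique minimizer θ̌_p of g_p; conversely, if g_p(θ*) > τ̌_p, then for τ = g_p(θ*) the sublevel set {θ : g_p(θ) ≤ τ} is a nondegenerate interval whose endpoints include θ* but which contains points other than θ*, so the ATE is not point identified. -/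
open Real Set

lemma strictConvexOn_abs_rpow {p : ℝ} (hp : 1 < p) :
    StrictConvexOn ℝ Set.univ (fun t : ℝ => |t| ^ p) := by
  have hp0 : (0 : ℝ) < p := lt_trans one_pos hp
  refine ⟨convex_univ, ?_⟩
  intro x _ y _ hxy a b ha hb hab
  simp only [smul_eq_mul]
  rcases eq_or_ne |x| |y| with habs | habs
  · -- |x| = |y| with x ≠ y forces y = -x, x ≠ 0
    rcases abs_eq_abs.mp habs with h | h
    · exact absurd h hxy
    · have hy0 : y ≠ 0 := by rintro rfl; exact hxy (by simpa using h)
      have h2 : |a - b| < 1 := by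
        rw [abs_lt]; constructor <;> linarith
      have h3 : |a * x + b * y| < |x| := by
        rw [h, abs_neg]
        rw [show a * -y + b * y = -((a - b) * y) by ring, abs_neg, abs_mul]
        calc |a - b| * |y| < 1 * |y| := mul_lt_mul_of_pos_right h2 (abs_pos.mpr hy0)
          _ = |y| := one_mul _
      have h4 : |a * x + b * y| ^ p < |x| ^ p :=
        Real.rpow_lt_rpow (abs_nonneg _) h3 hp0
      have h5 : |y| = |x| := habs.symm
      rw [h5]
      calc |a * x + b * y| ^ p < |x| ^ p := h4
        _ = a * |x| ^ p + b * |x| ^ p := by rw [← add_mul, hab, one_mul]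
  · have h1 : |a * x + b * y| ^ p ≤ (a * |x| + b * |y|) ^ p := by
      apply Real.rpow_le_rpow (abs_nonneg _) _ hp0.le
      calc |a * x + b * y| ≤ |a * x| + |b * y| := abs_add_le _ _
        _ = a * |x| + b * |y| := by rw [abs_mul, abs_mul, abs_of_pos ha, abs_of_pos hb]
    have h2 := (strictConvexOn_rpow hp).2 (Set.mem_Ici.mpr (abs_nonneg x))
      (Set.mem_Ici.mpr (abs_nonneg y)) habs ha hb hab
    simp only [smul_eq_mul] at h2
    linarith

/-- The leakage curve `g_p(θ) = ‖α − θ·β‖_p`, where `‖·‖_p` is the `ℓ^p` norm on `ℝ^d`. -/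
noncomputable def gLeak {d : ℕ} (p : ℝ) (α β : Fin d → ℝ) (θ : ℝ) : ℝ :=
  (∑ i, |α i - θ * β i| ^ p) ^ (1 / p)

/-- The `p`-th power of the leakage curve. -/
noncomputable def hLeak {d : ℕ} (p : ℝ) (α β : Fin d → ℝ) (θ : ℝ) : ℝ :=
  ∑ i, |α i - θ * β i| ^ p

lemma hLeak_nonneg {d : ℕ} (p : ℝ) (α β : Fin d → ℝ) (θ : ℝ) : 0 ≤ hLeak p α β θ :=
  Finset.sum_nonneg fun i _ => Real.rpow_nonneg (abs_nonneg _) p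

lemma gLeak_eq {d : ℕ} (p : ℝ) (α β : Fin d → ℝ) (θ : ℝ) :
    gLeak p α β θ = (hLeak p α β θ) ^ (1 / p) := rfl

lemma gLeak_nonneg {d : ℕ} (p : ℝ) (α β : Fin d → ℝ) (θ : ℝ) : 0 ≤ gLeak p α β θ :=
  Real.rpow_nonneg (hLeak_nonneg p α β θ) _

lemma gLeak_le_iff {d : ℕ} {p : ℝ} (hp : 0 < p) (α β : Fin d → ℝ) (θ θ' : ℝ) :
    gLeak p α β θ ≤ gLeak p α β θ' ↔ hLeak p α β θ ≤ hLeak p α β θ' := by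
  rw [gLeak_eq, gLeak_eq]
  exact Real.rpow_le_rpow_iff (hLeak_nonneg _ _ _ _) (hLeak_nonneg _ _ _ _)
    (one_div_pos.mpr hp)

lemma hLeak_strictConvexOn {d : ℕ} {p : ℝ} (hp : 1 < p) (α β : Fin d → ℝ)
    {i0 : Fin d} (hi0 : β i0 ≠ 0) :
    StrictConvexOn ℝ Set.univ (hLeak p α β) := by
  refine ⟨convex_univ, ?_⟩
  intro x _ y _ hxy a b ha hb hab
  simp only [smul_eq_mul, hLeak, Finset.mul_sum, ← Finset.sum_add_distrib]
  apply Finset.sum_lt_sum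
  · intro i _
    have key : α i - (a * x + b * y) * β i
        = a * (α i - x * β i) + b * (α i - y * β i) := by
      linear_combination (α i) * hab.symm
    rw [key]
    have := (strictConvexOn_abs_rpow hp).convexOn.2 (Set.mem_univ (α i - x * β i))
      (Set.mem_univ (α i - y * β i)) ha.le hb.le hab
    simpa [smul_eq_mul] using this
  · refine ⟨i0, Finset.mem_univ _, ?_⟩
    have key : α i0 - (a * x + b * y) * β i0
        = a * (α i0 - x * β i0) + b * (α i0 - y * β i0) := by
      linear_combination (α i0) * hab.symm
    rw [key]
    have hne : α i0 - x * β i0 ≠ α i0 - y * β i0 := by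
      intro h
      apply hxy
      have : x * β i0 = y * β i0 := by linarith [h]
      exact mul_right_cancel₀ hi0 this
    have := (strictConvexOn_abs_rpow hp).2 (Set.mem_univ (α i0 - x * β i0))
      (Set.mem_univ (α i0 - y * β i0)) hne ha hb hab
    simpa [smul_eq_mul] using this

lemma hLeak_continuous {d : ℕ} {p : ℝ} (hp : 0 < p) (α β : Fin d → ℝ) :
    Continuous (hLeak p α β) := by
  apply continuous_finset_sum
  intro i _
  exact ((continuous_const.sub (continuous_id.mul continuous_const)).abs).rpow_const
    (fun x => Or.inr hp.le)

/-- **point-identifiability clause of Theorem 1.** Assume `β ≠ 0`, `1 < p < ∞`.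
If `g_p(θ*) = τ̌_p` then `θ*` is the unique minimizer of `g_p`; conversely, if
`g_p(θ*) > τ̌_p`, then for `τ = g_p(θ*)` the sublevel set `{θ : g_p(θ) ≤ τ}` is a
nondegenerate interval whose endpoints include `θ*` but which contains points other than
`θ*`, so the ATE is not point identified. -/
theorem point_identifiability
    {d : ℕ} (hd : 1 ≤ d) (p : ℝ) (hp : 1 < p) (α β : Fin d → ℝ) (hβ : β ≠ 0) (θstar : ℝ) :
    (gLeak p α β θstar = (⨅ θ : ℝ, gLeak p α β θ) →
      (∀ t : ℝ, gLeak p α β θstar ≤ gLeak p α β t) ∧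
      (∀ θ : ℝ, (∀ t : ℝ, gLeak p α β θ ≤ gLeak p α β t) → θ = θstar)) ∧
    ((⨅ θ : ℝ, gLeak p α β θ) < gLeak p α β θstar →
      ∃ θlo θhi : ℝ, θlo < θhi ∧
        {θ : ℝ | gLeak p α β θ ≤ gLeak p α β θstar} = Set.Icc θlo θhi ∧
        (θstar = θlo ∨ θstar = θhi) ∧
        ∃ θ' ∈ Set.Icc θlo θhi, θ' ≠ θstar) := by
  have hp0 : (0 : ℝ) < p := lt_trans one_pos hp
  obtain ⟨i0, hi0⟩ : ∃ i, β i ≠ 0 := Function.ne_iff.mp hβ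
  have hstrict := hLeak_strictConvexOn hp α β hi0
  have hbdd : BddBelow (Set.range (gLeak p α β)) :=
    ⟨0, by rintro _ ⟨t, rfl⟩; exact gLeak_nonneg p α β t⟩
  constructor
  · -- point identified case
    intro heq
    have hmin : ∀ t : ℝ, gLeak p α β θstar ≤ gLeak p α β t := by
      intro t
      rw [heq]
      exact ciInf_le hbdd t
    refine ⟨hmin, ?_⟩
    intro θ hθ
    by_contra hne
    -- both minimize hLeak
    have h1 : hLeak p α β θ ≤ hLeak p α β θstar :=
      (gLeak_le_iff hp0 α β θ θstar).mp (hθ θstar)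
    have h2 : hLeak p α β θstar ≤ hLeak p α β θ :=
      (gLeak_le_iff hp0 α β θstar θ).mp (hmin θ)
    have hmid := hstrict.2 (Set.mem_univ θ) (Set.mem_univ θstar) hne
      (by norm_num : (0:ℝ) < 1/2) (by norm_num : (0:ℝ) < 1/2) (by norm_num)
    simp only [smul_eq_mul] at hmid
    have h3 : hLeak p α β θstar ≤ hLeak p α β (1/2 * θ + 1/2 * θstar) :=
      (gLeak_le_iff hp0 α β θstar _).mp (hmin _)
    linarith
  · -- not point identified case
    intro hlt
    obtain ⟨t0, ht0⟩ : ∃ t, gLeak p α β t < gLeak p α β θstar := by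
      exact exists_lt_of_ciInf_lt hlt
    set S : Set ℝ := {θ : ℝ | gLeak p α β θ ≤ gLeak p α β θstar} with hSdef
    have hSeq : S = {θ : ℝ | hLeak p α β θ ≤ hLeak p α β θstar} := by
      ext z
      exact gLeak_le_iff hp0 α β z θstar
    have hSclosed : IsClosed S := by
      rw [hSeq]
      exact isClosed_le (hLeak_continuous hp0 α β) continuous_const
    have hSconvex : Convex ℝ S := by
      rw [hSeq]
      have := hstrict.convexOn.convex_le (hLeak p α β θstar)
      simpa using this
    -- boundedness
    have hsub : S ⊆ Set.Icc (-((|α i0| + (hLeak p α β θstar) ^ (1/p)) / |β i0|))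
        ((|α i0| + (hLeak p α β θstar) ^ (1/p)) / |β i0|) := by
      intro z hz
      rw [hSeq] at hz
      have hterm : |α i0 - z * β i0| ^ p ≤ hLeak p α β θstar := by
        refine le_trans ?_ hz
        exact Finset.single_le_sum (f := fun i => |α i - z * β i| ^ p)
          (fun i _ => Real.rpow_nonneg (abs_nonneg _) p) (Finset.mem_univ i0)
      have hR : |α i0 - z * β i0| ≤ (hLeak p α β θstar) ^ (1/p) := by
        have h2 : |α i0 - z * β i0| ^ p ≤ ((hLeak p α β θstar) ^ (1/p)) ^ p := by
          rw [one_div, Real.rpow_inv_rpow (hLeak_nonneg p α β θstar) hp0.ne']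
          exact hterm
        exact (Real.rpow_le_rpow_iff (abs_nonneg _)
          (Real.rpow_nonneg (hLeak_nonneg p α β θstar) _) hp0).mp h2
      have hzb : |z| * |β i0| ≤ |α i0| + (hLeak p α β θstar) ^ (1/p) := by
        have : |z * β i0| - |α i0| ≤ |α i0 - z * β i0| := by
          have := abs_sub_abs_le_abs_sub (z * β i0) (α i0)
          have h3 : |z * β i0 - α i0| = |α i0 - z * β i0| := abs_sub_comm _ _
          linarith
        rw [abs_mul] at this
        linarith
      have hβpos : 0 < |β i0| := abs_pos.mpr hi0
      have : |z| ≤ (|α i0| + (hLeak p α β θstar) ^ (1/p)) / |β i0| :=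
        (le_div_iff₀ hβpos).mpr hzb
      exact abs_le.mp this
    have hBddB : BddBelow S := BddBelow.mono hsub bddBelow_Icc
    have hBddA : BddAbove S := BddAbove.mono hsub bddAbove_Icc
    have hstarS : θstar ∈ S := by
      show gLeak p α β θstar ≤ gLeak p α β θstar
      exact le_refl _
    have hSne : S.Nonempty := ⟨θstar, hstarS⟩
    set θlo := sInf S with hθlo
    set θhi := sSup S with hθhi
    have hlomem : θlo ∈ S := hSclosed.csInf_mem hSne hBddB
    have hhimem : θhi ∈ S := hSclosed.csSup_mem hSne hBddA
    have hSIcc : S = Set.Icc θlo θhi := by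
      ext z
      constructor
      · intro hz
        exact ⟨csInf_le hBddB hz, le_csSup hBddA hz⟩
      · intro hz
        exact hSconvex.ordConnected.out hlomem hhimem hz
    have ht0S : t0 ∈ S := by simp only [hSdef, Set.mem_setOf_eq]; exact ht0.le
    have ht0ne : t0 ≠ θstar := fun h => absurd (h ▸ ht0) (lt_irrefl _)
    have hlohi : θlo < θhi := by
      rcases lt_or_eq_of_le ((hSIcc ▸ hstarS).1.trans (hSIcc ▸ hstarS).2) with h | h
      · exact h
      · exfalso
        have h1 := hSIcc ▸ hstarS
        have h2 := hSIcc ▸ ht0S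
        rw [← h] at h1 h2
        simp [Set.Icc_self] at h1 h2
        exact ht0ne (by rw [h1, h2])
    refine ⟨θlo, θhi, hlohi, hSIcc, ?_, ⟨t0, hSIcc ▸ ht0S, ht0ne⟩⟩
    -- θstar is an endpoint
    by_contra hend
    push_neg at hend
    obtain ⟨hne1, hne2⟩ := hend
    have hmem := hSIcc ▸ hstarS
    have h1 : θlo < θstar := lt_of_le_of_ne hmem.1 (Ne.symm hne1)
    have h2 : θstar < θhi := lt_of_le_of_ne hmem.2 hne2
    set a := (θhi - θstar) / (θhi - θlo) with hadef
    set b := (θstar - θlo) / (θhi - θlo) with hbdef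
    have hden : (0:ℝ) < θhi - θlo := by linarith
    have ha : 0 < a := div_pos (by linarith) hden
    have hb : 0 < b := div_pos (by linarith) hden
    have hab : a + b = 1 := by
      rw [hadef, hbdef, ← add_div]
      field_simp
      ring
    have hcombo : a * θlo + b * θhi = θstar := by
      rw [hadef, hbdef]
      field_simp
      ring
    have hkey := hstrict.2 (Set.mem_univ θlo) (Set.mem_univ θhi) (ne_of_lt hlohi) ha hb hab
    simp only [smul_eq_mul] at hkey
    rw [hcombo] at hkey
    have hlole : hLeak p α β θlo ≤ hLeak p α β θstar := by
      rw [hSeq] at hlomem; exact hlomem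
    have hhile : hLeak p α β θhi ≤ hLeak p α β θstar := by
      rw [hSeq] at hhimem; exact hhimem
    have e1 : a * hLeak p α β θlo ≤ a * hLeak p α β θstar :=
      mul_le_mul_of_nonneg_left hlole ha.le
    have e2 : b * hLeak p α β θhi ≤ b * hLeak p α β θstar :=
      mul_le_mul_of_nonneg_left hhile hb.le
    have : hLeak p α β θstar < (a + b) * hLeak p α β θstar := by
      rw [add_mul]; linarith
    rw [hab, one_mul] at this
    exact lt_irrefl _ this
end

section
/- Assume β ≠ 0, 1 < p < ∞, and τ > τ̌_p. Define h_p = g_p ∘ f on (−1, 1), and let ρ̌_p = f⁻¹(θ̌_p) where θ̌_p is the unique minimizer of g_p. Then there exist unique ρ⁻ ∈ (−1, ρ̌_p) and ρ⁺ ∈ (ρ̌_p, 1) such that h_p(ρ⁻) = h_p(ρ⁺) = τ; moreover, writing [θ⁻, θ⁺] = {θ ∈ ℝ : g_p(θ) ≤ τ}, one has θ⁻ = f(ρ⁺) and θ⁺ = f(ρ⁻). -/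
open Real Set

/-- convexity of |x|^p, with strictness when u ≠ v -/
lemma abs_rpow_cvx {p : ℝ} (hp : 1 < p) (u v t s : ℝ) (ht : 0 < t) (hs : 0 < s)
    (hts : t + s = 1) : |t * u + s * v| ^ p ≤ t * |u| ^ p + s * |v| ^ p := by
  have h1 : |t * u + s * v| ≤ t * |u| + s * |v| := by
    calc |t * u + s * v| ≤ |t * u| + |s * v| := abs_add_le _ _
    _ = t * |u| + s * |v| := by rw [abs_mul, abs_mul, abs_of_pos ht, abs_of_pos hs]
  have h2 : |t * u + s * v| ^ p ≤ (t * |u| + s * |v|) ^ p :=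
    Real.rpow_le_rpow (abs_nonneg _) h1 (by positivity)
  refine h2.trans ?_
  have := (convexOn_rpow hp.le).2 (Set.mem_Ici.2 (abs_nonneg u)) (Set.mem_Ici.2 (abs_nonneg v))
    ht.le hs.le hts
  simpa using this

lemma abs_rpow_scvx {p : ℝ} (hp : 1 < p) {u v : ℝ} (huv : u ≠ v) (t s : ℝ) (ht : 0 < t)
    (hs : 0 < s) (hts : t + s = 1) : |t * u + s * v| ^ p < t * |u| ^ p + s * |v| ^ p := by
  rcases eq_or_ne |u| |v| with hab | hab
  · -- |u| = |v|, u ≠ v ⇒ u = -v, v ≠ 0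
    have hv : v ≠ 0 := by
      rintro rfl; simp at hab; exact huv (by simpa [hab])
    have hu : u = -v := by
      rcases abs_eq_abs.1 hab with h | h
      · exact absurd h huv
      · exact h
    have hlt : |t * u + s * v| < |v| := by
      rw [hu]
      have : t * -v + s * v = (s - t) * v := by ring
      rw [this, abs_mul]
      have hst : |s - t| < 1 := by
        rw [abs_lt]; constructor <;> nlinarith
      calc |s - t| * |v| < 1 * |v| := by
            exact mul_lt_mul_of_pos_right hst (abs_pos.2 hv)
      _ = |v| := one_mul _
    have : |t * u + s * v| ^ p < |v| ^ p :=
      Real.rpow_lt_rpow (abs_nonneg _) hlt (by positivity)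
    calc |t * u + s * v| ^ p < |v| ^ p := this
    _ = t * |u| ^ p + s * |v| ^ p := by rw [hu, abs_neg]; linear_combination (-(|v| ^ p)) * hts
  · have h1 : |t * u + s * v| ≤ t * |u| + s * |v| := by
      calc |t * u + s * v| ≤ |t * u| + |s * v| := abs_add_le _ _
      _ = t * |u| + s * |v| := by rw [abs_mul, abs_mul, abs_of_pos ht, abs_of_pos hs]
    have h2 : |t * u + s * v| ^ p ≤ (t * |u| + s * |v|) ^ p :=
      Real.rpow_le_rpow (abs_nonneg _) h1 (by positivity)
    refine h2.trans_lt ?_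
    have := (strictConvexOn_rpow hp).2 (Set.mem_Ici.2 (abs_nonneg u))
      (Set.mem_Ici.2 (abs_nonneg v)) hab ht hs hts
    simpa using this

lemma gLeak_sum_nonneg {d : ℕ} (p : ℝ) (α β : Fin d → ℝ) (θ : ℝ) :
    0 ≤ ∑ i, |α i - θ * β i| ^ p :=
  Finset.sum_nonneg fun i _ => Real.rpow_nonneg (abs_nonneg _) _

lemma gLeak_quasi {d : ℕ} {p : ℝ} (hp : 1 < p) (α β : Fin d → ℝ) (hβ : β ≠ 0)
    {x y t s : ℝ} (hxy : x ≠ y) (ht : 0 < t) (hs : 0 < s) (hts : t + s = 1) :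
    gLeak p α β (t * x + s * y) < max (gLeak p α β x) (gLeak p α β y) := by
  obtain ⟨i0, hi0⟩ := Function.ne_iff.1 hβ
  have hi0' : β i0 ≠ 0 := by simpa using hi0
  have key : ∑ i, |α i - (t * x + s * y) * β i| ^ p
      < t * (∑ i, |α i - x * β i| ^ p) + s * (∑ i, |α i - y * β i| ^ p) := by
    rw [Finset.mul_sum, Finset.mul_sum, ← Finset.sum_add_distrib]
    refine Finset.sum_lt_sum (fun i _ => ?_) ⟨i0, Finset.mem_univ _, ?_⟩
    · have harg : α i - (t * x + s * y) * β i
          = t * (α i - x * β i) + s * (α i - y * β i) := by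
        linear_combination (α i) * hts.symm
      rw [harg]
      exact abs_rpow_cvx hp _ _ t s ht hs hts
    · have harg : α i0 - (t * x + s * y) * β i0
          = t * (α i0 - x * β i0) + s * (α i0 - y * β i0) := by
        linear_combination (α i0) * hts.symm
      rw [harg]
      refine abs_rpow_scvx hp ?_ t s ht hs hts
      intro h
      apply hxy
      have : (x - y) * β i0 = 0 := by linarith
      rcases mul_eq_zero.1 this with h' | h'
      · linarith
      · exact absurd h' hi0'
  set Sx := ∑ i, |α i - x * β i| ^ p with hSx
  set Sy := ∑ i, |α i - y * β i| ^ p with hSy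
  have hM : t * Sx + s * Sy ≤ max Sx Sy := by
    calc t * Sx + s * Sy ≤ t * max Sx Sy + s * max Sx Sy := by
          gcongr <;> simp [le_max_left, le_max_right]
    _ = max Sx Sy := by linear_combination (max Sx Sy) * hts
  have hlt : ∑ i, |α i - (t * x + s * y) * β i| ^ p < max Sx Sy := lt_of_lt_of_le key hM
  have h2 : gLeak p α β (t * x + s * y) < (max Sx Sy) ^ (1 / p) :=
    Real.rpow_lt_rpow (gLeak_sum_nonneg p α β _) hlt (by positivity)
  have h3 : (max Sx Sy) ^ (1 / p) = max (gLeak p α β x) (gLeak p α β y) := by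
    unfold gLeak
    rcases le_total Sx Sy with h | h
    · rw [max_eq_right h, max_eq_right
        (Real.rpow_le_rpow (gLeak_sum_nonneg p α β x) h (by positivity))]
    · rw [max_eq_left h, max_eq_left
        (Real.rpow_le_rpow (gLeak_sum_nonneg p α β y) h (by positivity))]
  rwa [h3] at h2

lemma gLeak_strict_right {d : ℕ} {p : ℝ} (hp : 1 < p) (α β : Fin d → ℝ) (hβ : β ≠ 0)
    {θmin : ℝ} (hθmin : ∀ t : ℝ, gLeak p α β θmin ≤ gLeak p α β t)
    {a b : ℝ} (ha : θmin ≤ a) (hab : a < b) : gLeak p α β a < gLeak p α β b := by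
  rcases eq_or_lt_of_le ha with rfl | ha'
  · have h := gLeak_quasi hp α β hβ (ne_of_lt hab) (t := 1/2) (s := 1/2)
      (by norm_num) (by norm_num) (by norm_num)
    rw [max_eq_right (hθmin b)] at h
    exact lt_of_le_of_lt (hθmin _) h
  · have hb : θmin < b := lt_trans ha' hab
    have hne : b - θmin ≠ 0 := by intro h; apply absurd hb; simp; linarith
    have ht : 0 < (b - a) / (b - θmin) := by apply div_pos <;> linarith
    have hs : 0 < (a - θmin) / (b - θmin) := by apply div_pos <;> linarith
    have hts : (b - a) / (b - θmin) + (a - θmin) / (b - θmin) = 1 := by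
      field_simp; ring
    have hcomb : a = (b - a) / (b - θmin) * θmin + (a - θmin) / (b - θmin) * b := by
      field_simp; ring
    have h := gLeak_quasi hp α β hβ (ne_of_lt hb) ht hs hts
    rw [max_eq_right (hθmin b), ← hcomb] at h
    exact h

lemma gLeak_strict_left {d : ℕ} {p : ℝ} (hp : 1 < p) (α β : Fin d → ℝ) (hβ : β ≠ 0)
    {θmin : ℝ} (hθmin : ∀ t : ℝ, gLeak p α β θmin ≤ gLeak p α β t)
    {a b : ℝ} (hab : a < b) (hb : b ≤ θmin) : gLeak p α β b < gLeak p α β a := by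
  rcases eq_or_lt_of_le hb with rfl | hb'
  · have h := gLeak_quasi hp α β hβ (ne_of_lt hab) (t := 1/2) (s := 1/2)
      (by norm_num) (by norm_num) (by norm_num)
    rw [max_eq_left (hθmin a)] at h
    exact lt_of_le_of_lt (hθmin _) h
  · have ha : a < θmin := lt_trans hab hb'
    have hne : θmin - a ≠ 0 := by intro h; apply absurd ha; simp; linarith
    have ht : 0 < (θmin - b) / (θmin - a) := by apply div_pos <;> linarith
    have hs : 0 < (b - a) / (θmin - a) := by apply div_pos <;> linarith
    have hts : (θmin - b) / (θmin - a) + (b - a) / (θmin - a) = 1 := by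
      field_simp; ring
    have hcomb : b = (θmin - b) / (θmin - a) * a + (b - a) / (θmin - a) * θmin := by
      field_simp; ring
    have h := gLeak_quasi hp α β hβ (ne_of_lt ha) ht hs hts
    rw [max_eq_left (hθmin a), ← hcomb] at h
    exact h

lemma gLeak_ge_abs {d : ℕ} {p : ℝ} (hp : 1 < p) (α β : Fin d → ℝ) (i0 : Fin d) (θ : ℝ) :
    |α i0 - θ * β i0| ≤ gLeak p α β θ := by
  have h1 : |α i0 - θ * β i0| ^ p ≤ ∑ i, |α i - θ * β i| ^ p :=
    Finset.single_le_sum (f := fun i => |α i - θ * β i| ^ p)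
      (fun i _ => Real.rpow_nonneg (abs_nonneg _) p) (Finset.mem_univ i0)
  have h2 : (|α i0 - θ * β i0| ^ p) ^ (1 / p) ≤ (∑ i, |α i - θ * β i| ^ p) ^ (1 / p) :=
    Real.rpow_le_rpow (by positivity) h1 (by positivity)
  rw [one_div, Real.rpow_rpow_inv (abs_nonneg _) (by positivity)] at h2
  rw [gLeak, one_div]
  exact h2

lemma gLeak_continuous {d : ℕ} {p : ℝ} (hp : 1 < p) (α β : Fin d → ℝ) :
    Continuous (gLeak p α β) := by
  have hS : Continuous fun θ : ℝ => ∑ i, |α i - θ * β i| ^ p := by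
    refine continuous_finset_sum _ fun i _ => ?_
    exact ((continuous_const.sub (continuous_id.mul continuous_const)).abs).rpow_const
      (fun x => Or.inr (by positivity))
  exact hS.rpow_const fun x => Or.inr (by positivity)

lemma ratio_mono : ∀ {ρ1 ρ2 : ℝ}, ρ1 ∈ Set.Ioo (-1:ℝ) 1 → ρ2 ∈ Set.Ioo (-1:ℝ) 1 →
    ρ1 < ρ2 → ρ1 / Real.sqrt (1 - ρ1 ^ 2) < ρ2 / Real.sqrt (1 - ρ2 ^ 2) := by
  rintro ρ1 ρ2 ⟨h1a, h1b⟩ ⟨h2a, h2b⟩ hlt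
  have hpos1 : (0:ℝ) < 1 - ρ1 ^ 2 := by nlinarith
  have hpos2 : (0:ℝ) < 1 - ρ2 ^ 2 := by nlinarith
  have hs1 : 0 < Real.sqrt (1 - ρ1 ^ 2) := Real.sqrt_pos.2 hpos1
  have hs2 : 0 < Real.sqrt (1 - ρ2 ^ 2) := Real.sqrt_pos.2 hpos2
  rw [div_lt_div_iff₀ hs1 hs2]
  rcases le_or_gt 0 ρ1 with h0 | h0
  · -- 0 ≤ ρ1 < ρ2 : sqrt(1-ρ2²) < sqrt(1-ρ1²)
    have hsq : Real.sqrt (1 - ρ2 ^ 2) < Real.sqrt (1 - ρ1 ^ 2) := by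
      apply Real.sqrt_lt_sqrt hpos2.le; nlinarith
    calc ρ1 * Real.sqrt (1 - ρ2 ^ 2) ≤ ρ1 * Real.sqrt (1 - ρ1 ^ 2) := by
          apply mul_le_mul_of_nonneg_left hsq.le h0
    _ < ρ2 * Real.sqrt (1 - ρ1 ^ 2) := by
          exact mul_lt_mul_of_pos_right (by linarith) hs1
  · rcases le_or_gt 0 ρ2 with h0' | h0'
    · -- ρ1 < 0 ≤ ρ2
      calc ρ1 * Real.sqrt (1 - ρ2 ^ 2) < 0 := mul_neg_of_neg_of_pos h0 hs2
      _ ≤ ρ2 * Real.sqrt (1 - ρ1 ^ 2) := mul_nonneg h0' hs1.le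
    · -- ρ1 < ρ2 < 0 : sqrt(1-ρ1²) < sqrt(1-ρ2²)
      have hsq : Real.sqrt (1 - ρ1 ^ 2) < Real.sqrt (1 - ρ2 ^ 2) := by
        apply Real.sqrt_lt_sqrt hpos1.le; nlinarith
      calc ρ1 * Real.sqrt (1 - ρ2 ^ 2) < ρ2 * Real.sqrt (1 - ρ2 ^ 2) := by
            exact mul_lt_mul_of_pos_right (by linarith) hs2
      _ ≤ ρ2 * Real.sqrt (1 - ρ1 ^ 2) := by nlinarith
    
lemma ratio_surj (t : ℝ) : ∃ ρ ∈ Set.Ioo (-1:ℝ) 1, ρ / Real.sqrt (1 - ρ ^ 2) = t := by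
  have h1t : (0:ℝ) < 1 + t ^ 2 := by positivity
  have hst : 0 < Real.sqrt (1 + t ^ 2) := Real.sqrt_pos.2 h1t
  refine ⟨t / Real.sqrt (1 + t ^ 2), ?_, ?_⟩
  · have habs : |t / Real.sqrt (1 + t ^ 2)| < 1 := by
      rw [abs_div, abs_of_pos hst, div_lt_one hst]
      calc |t| = Real.sqrt (t ^ 2) := (Real.sqrt_sq_eq_abs t).symm
      _ < Real.sqrt (1 + t ^ 2) := Real.sqrt_lt_sqrt (sq_nonneg t) (by linarith)
    exact abs_lt.1 habs
  · have hsq : Real.sqrt (1 + t ^ 2) ^ 2 = 1 + t ^ 2 := Real.sq_sqrt h1t.le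
    have h1 : 1 - (t / Real.sqrt (1 + t ^ 2)) ^ 2 = 1 / (1 + t ^ 2) := by
      rw [div_pow, hsq]; field_simp; ring
    rw [h1, one_div, Real.sqrt_inv, div_inv_eq_mul, div_mul_cancel₀ _ hst.ne']

/-- **Theorem 2, ATE bounds.** Assume `β ≠ 0`, `1 < p < ∞`, and `τ > τ̌_p`.
With `h_p = g_p ∘ f` on `(−1, 1)` and `ρ̌_p = f⁻¹(θ̌_p)` for the unique minimizer `θ̌_p` of
`g_p`, there exist unique `ρ⁻ ∈ (−1, ρ̌_p)` and `ρ⁺ ∈ (ρ̌_p, 1)` with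
`h_p(ρ⁻) = h_p(ρ⁺) = τ`; moreover, writing `[θ⁻, θ⁺] = {θ : g_p(θ) ≤ τ}`, one has
`θ⁻ = f(ρ⁺)` and `θ⁺ = f(ρ⁻)`. -/
theorem ATE_bounds
    {d : ℕ} (hd : 1 ≤ d) (p : ℝ) (hp : 1 < p) (α β : Fin d → ℝ) (hβ : β ≠ 0)
    (κxx κxy κyy : ℝ) (hκxx : 0 < κxx) (hdet : 0 < κxx * κyy - κxy ^ 2)
    (f : ℝ → ℝ)
    (hf : ∀ ρ : ℝ, f ρ =
      κxx⁻¹ * (κxy - Real.sqrt (κxx * κyy - κxy ^ 2) * (ρ / Real.sqrt (1 - ρ ^ 2))))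
    (τ : ℝ) (hτ : (⨅ θ : ℝ, gLeak p α β θ) < τ)
    (θmin : ℝ) (hθmin : ∀ t : ℝ, gLeak p α β θmin ≤ gLeak p α β t)
    (ρmin : ℝ) (hρmem : ρmin ∈ Set.Ioo (-1 : ℝ) 1) (hρmin : f ρmin = θmin) :
    (∃! ρlo : ℝ, ρlo ∈ Set.Ioo (-1 : ℝ) ρmin ∧ (gLeak p α β ∘ f) ρlo = τ) ∧
    (∃! ρhi : ℝ, ρhi ∈ Set.Ioo ρmin 1 ∧ (gLeak p α β ∘ f) ρhi = τ) ∧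
    (∀ ρlo ρhi : ℝ,
      ρlo ∈ Set.Ioo (-1 : ℝ) ρmin → (gLeak p α β ∘ f) ρlo = τ →
      ρhi ∈ Set.Ioo ρmin 1 → (gLeak p α β ∘ f) ρhi = τ →
      {θ : ℝ | gLeak p α β θ ≤ τ} = Set.Icc (f ρhi) (f ρlo)) := by
  have hC : 0 < Real.sqrt (κxx * κyy - κxy ^ 2) := Real.sqrt_pos.2 hdet
  -- f is strictly decreasing on Ioo (-1) 1
  have hfanti : ∀ x ∈ Set.Ioo (-1:ℝ) 1, ∀ y ∈ Set.Ioo (-1:ℝ) 1, x < y → f y < f x := by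
    intro x hx y hy hxy
    rw [hf x, hf y]
    exact mul_lt_mul_of_pos_left
      (sub_lt_sub_left (mul_lt_mul_of_pos_left (ratio_mono hx hy hxy) hC) κxy)
      (inv_pos.2 hκxx)
  -- f is surjective onto ℝ from Ioo (-1) 1
  have hfsurj : ∀ θ : ℝ, ∃ ρ ∈ Set.Ioo (-1:ℝ) 1, f ρ = θ := by
    intro θ
    obtain ⟨ρ, hρ, hu⟩ := ratio_surj ((κxy - κxx * θ) / Real.sqrt (κxx * κyy - κxy ^ 2))
    refine ⟨ρ, hρ, ?_⟩
    rw [hf, hu, mul_div_cancel₀ _ hC.ne']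
    field_simp; ring
  -- f is continuous on Ioo (-1) 1
  have hfc : ContinuousOn f (Set.Ioo (-1:ℝ) 1) := by
    have hfeq : f = fun ρ => κxx⁻¹ *
        (κxy - Real.sqrt (κxx * κyy - κxy ^ 2) * (ρ / Real.sqrt (1 - ρ ^ 2))) := funext hf
    rw [hfeq]
    refine continuousOn_const.mul (continuousOn_const.sub (continuousOn_const.mul ?_))
    refine ContinuousOn.div continuousOn_id
      (Real.continuous_sqrt.comp_continuousOn
        (continuousOn_const.sub (continuousOn_id.pow 2))) ?_
    rintro x ⟨hx1, hx2⟩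
    have : (0:ℝ) < 1 - x ^ 2 := by nlinarith
    exact (Real.sqrt_pos.2 this).ne'
  have hGc : Continuous (gLeak p α β) := gLeak_continuous hp α β
  have hGmin : gLeak p α β θmin < τ := lt_of_le_of_lt (le_ciInf hθmin) hτ
  -- big values of G
  obtain ⟨i0, hi0⟩ := Function.ne_iff.1 hβ
  have hi0' : β i0 ≠ 0 := by simpa using hi0
  have hbabs : 0 < |β i0| := abs_pos.2 hi0'
  set M := |α i0 - θmin * β i0| + |τ| + 1 with hM_def
  have hM : 0 < M := by positivity
  have hbig : ∀ θ : ℝ, |θ - θmin| * |β i0| = M → τ < gLeak p α β θ := by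
    intro θ hMθ
    have h2 : |τ| + 1 ≤ |α i0 - θ * β i0| := by
      have h3 := abs_sub_abs_le_abs_sub ((θ - θmin) * β i0) (α i0 - θmin * β i0)
      have h4 : |(θ - θmin) * β i0 - (α i0 - θmin * β i0)| = |α i0 - θ * β i0| := by
        rw [abs_sub_comm]; congr 1; ring
      rw [abs_mul, hMθ, h4] at h3
      linarith
    calc τ ≤ |τ| := le_abs_self τ
    _ < |τ| + 1 := by linarith
    _ ≤ |α i0 - θ * β i0| := h2
    _ ≤ gLeak p α β θ := gLeak_ge_abs hp α β i0 θ
  have hθhi_big : τ < gLeak p α β (θmin + M / |β i0|) := by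
    apply hbig
    rw [add_sub_cancel_left, abs_div, abs_abs, abs_of_pos hM,
      div_mul_cancel₀ _ hbabs.ne']
  have hθlo_big : τ < gLeak p α β (θmin - M / |β i0|) := by
    apply hbig
    rw [sub_sub_cancel_left, abs_neg, abs_div, abs_abs, abs_of_pos hM,
      div_mul_cancel₀ _ hbabs.ne']
  have hθhi_gt : θmin < θmin + M / |β i0| := by
    have : 0 < M / |β i0| := div_pos hM hbabs
    linarith
  have hθlo_lt : θmin - M / |β i0| < θmin := by
    have : 0 < M / |β i0| := div_pos hM hbabs
    linarith
  -- preimages of the big points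
  obtain ⟨ρA, hρA, hfρA⟩ := hfsurj (θmin + M / |β i0|)   -- ρA < ρmin
  obtain ⟨ρB, hρB, hfρB⟩ := hfsurj (θmin - M / |β i0|)   -- ρmin < ρB
  have hρA_lt : ρA < ρmin := by
    rcases lt_trichotomy ρA ρmin with h | h | h
    · exact h
    · exfalso; rw [h, hρmin] at hfρA; linarith
    · exfalso
      have := hfanti ρmin hρmem ρA hρA h
      rw [hρmin, hfρA] at this; linarith
  have hρB_gt : ρmin < ρB := by
    rcases lt_trichotomy ρB ρmin with h | h | h
    · exfalso
      have := hfanti ρB hρB ρmin hρmem h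
      rw [hρmin, hfρB] at this; linarith
    · exfalso; rw [h, hρmin] at hfρB; linarith
    · exact h
  -- membership upgrade
  have memlo : ∀ x ∈ Set.Ioo (-1:ℝ) ρmin, x ∈ Set.Ioo (-1:ℝ) 1 :=
    fun x hx => ⟨hx.1, lt_trans hx.2 hρmem.2⟩
  have memhi : ∀ x ∈ Set.Ioo ρmin (1:ℝ), x ∈ Set.Ioo (-1:ℝ) 1 :=
    fun x hx => ⟨lt_trans hρmem.1 hx.1, hx.2⟩
  -- uniqueness on each side
  have uniq_hi : ∀ x ∈ Set.Ioo ρmin (1:ℝ), ∀ y ∈ Set.Ioo ρmin (1:ℝ),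
      gLeak p α β (f x) = τ → gLeak p α β (f y) = τ → x = y := by
    have key : ∀ x ∈ Set.Ioo ρmin (1:ℝ), ∀ y ∈ Set.Ioo ρmin (1:ℝ), x < y →
        gLeak p α β (f x) = τ → gLeak p α β (f y) = τ → False := by
      intro x hx y hy hxy hfx hfy
      have h1 : f y < f x := hfanti x (memhi x hx) y (memhi y hy) hxy
      have h2 : f x < θmin := by
        have := hfanti ρmin hρmem x (memhi x hx) hx.1
        rwa [hρmin] at this
      have := gLeak_strict_left hp α β hβ hθmin h1 h2.le
      rw [hfx, hfy] at this; linarith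
    intro x hx y hy hfx hfy
    rcases lt_trichotomy x y with h | h | h
    · exact absurd (key x hx y hy h hfx hfy) (not_false)
    · exact h
    · exact absurd (key y hy x hx h hfy hfx) (not_false)
  have uniq_lo : ∀ x ∈ Set.Ioo (-1:ℝ) ρmin, ∀ y ∈ Set.Ioo (-1:ℝ) ρmin,
      gLeak p α β (f x) = τ → gLeak p α β (f y) = τ → x = y := by
    have key : ∀ x ∈ Set.Ioo (-1:ℝ) ρmin, ∀ y ∈ Set.Ioo (-1:ℝ) ρmin, x < y →
        gLeak p α β (f x) = τ → gLeak p α β (f y) = τ → False := by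
      intro x hx y hy hxy hfx hfy
      have h1 : f y < f x := hfanti x (memlo x hx) y (memlo y hy) hxy
      have h2 : θmin < f y := by
        have := hfanti y (memlo y hy) ρmin hρmem hy.2
        rwa [hρmin] at this
      have := gLeak_strict_right hp α β hβ hθmin h2.le h1
      rw [hfx, hfy] at this; linarith
    intro x hx y hy hfx hfy
    rcases lt_trichotomy x y with h | h | h
    · exact absurd (key x hx y hy h hfx hfy) (not_false)
    · exact h
    · exact absurd (key y hy x hx h hfy hfx) (not_false)
  -- existence on the high side (via IVT on [ρmin, ρB])
  have hcont_hi : ContinuousOn (gLeak p α β ∘ f) (Set.Icc ρmin ρB) := by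
    apply hGc.comp_continuousOn (hfc.mono ?_)
    intro x hx
    exact ⟨lt_of_lt_of_le hρmem.1 hx.1, lt_of_le_of_lt hx.2 hρB.2⟩
  have hIVT_hi : τ ∈ (gLeak p α β ∘ f) '' Set.Ioo ρmin ρB := by
    apply intermediate_value_Ioo hρB_gt.le hcont_hi
    constructor
    · show (gLeak p α β ∘ f) ρmin < τ
      simp only [Function.comp_apply, hρmin]; exact hGmin
    · show τ < (gLeak p α β ∘ f) ρB
      simp only [Function.comp_apply, hfρB]; exact hθlo_big
  obtain ⟨ρhi0, hρhi0, hρhi0eq⟩ := hIVT_hi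
  -- existence on the low side (via IVT on [ρA, ρmin])
  have hcont_lo : ContinuousOn (gLeak p α β ∘ f) (Set.Icc ρA ρmin) := by
    apply hGc.comp_continuousOn (hfc.mono ?_)
    intro x hx
    exact ⟨lt_of_lt_of_le hρA.1 hx.1, lt_of_le_of_lt hx.2 hρmem.2⟩
  have hIVT_lo : τ ∈ (gLeak p α β ∘ f) '' Set.Ioo ρA ρmin := by
    apply intermediate_value_Ioo' hρA_lt.le hcont_lo
    constructor
    · show (gLeak p α β ∘ f) ρmin < τ
      simp only [Function.comp_apply, hρmin]; exact hGmin
    · show τ < (gLeak p α β ∘ f) ρA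
      simp only [Function.comp_apply, hfρA]; exact hθhi_big
  obtain ⟨ρlo0, hρlo0, hρlo0eq⟩ := hIVT_lo
  refine ⟨⟨ρlo0, ⟨⟨lt_of_lt_of_le hρA.1 hρlo0.1.le, hρlo0.2⟩, hρlo0eq⟩, ?_⟩,
    ⟨ρhi0, ⟨⟨hρhi0.1, lt_of_le_of_lt hρhi0.2.le hρB.2⟩, hρhi0eq⟩, ?_⟩, ?_⟩
  · rintro y ⟨hy, hyeq⟩
    exact uniq_lo y hy ρlo0 ⟨lt_of_lt_of_le hρA.1 hρlo0.1.le, hρlo0.2⟩ hyeq hρlo0eq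
  · rintro y ⟨hy, hyeq⟩
    exact uniq_hi y hy ρhi0 ⟨hρhi0.1, lt_of_le_of_lt hρhi0.2.le hρB.2⟩ hyeq hρhi0eq
  · intro ρlo ρhi hmlo hlo hmhi hhi
    have ha : f ρhi < θmin := by
      have := hfanti ρmin hρmem ρhi (memhi ρhi hmhi) hmhi.1
      rwa [hρmin] at this
    have hb : θmin < f ρlo := by
      have := hfanti ρlo (memlo ρlo hmlo) ρmin hρmem hmlo.2
      rwa [hρmin] at this
    have hGa : gLeak p α β (f ρhi) = τ := hhi
    have hGb : gLeak p α β (f ρlo) = τ := hlo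
    ext θ
    simp only [Set.mem_setOf_eq, Set.mem_Icc]
    constructor
    · intro hGθ
      constructor
      · by_contra hcon
        push_neg at hcon
        have := gLeak_strict_left hp α β hβ hθmin hcon ha.le
        rw [hGa] at this; linarith
      · by_contra hcon
        push_neg at hcon
        have := gLeak_strict_right hp α β hβ hθmin hb.le hcon
        rw [hGb] at this; linarith
    · rintro ⟨h1, h2⟩
      rcases le_total θ θmin with hside | hside
      · rcases eq_or_lt_of_le h1 with rfl | h1'
        · exact le_of_eq hGa
        · have := gLeak_strict_left hp α β hβ hθmin h1' hside
          rw [hGa] at this; linarith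
      · rcases eq_or_lt_of_le h2 with rfl | h2'
        · exact le_of_eq hGb
        · have := gLeak_strict_right hp α β hβ hθmin hside h2'
          rw [hGb] at this; linarith
end

section
/- Assume β ≠ 0 and τ ≥ τ̌₂, where τ̌₂ = min over θ of ‖α − θ·β‖₂. Then the minimum and maximum elements of the set {θ ∈ ℝ : ‖α − θ·β‖₂ ≤ τ} are exactly θ̌₂ − (β·β)⁻¹·√( (β·β)(τ² − α·α) + (α·β)² ) and θ̌₂ + (β·β)⁻¹·√( (β·β)(τ² − α·α) + (α·β)² ), respectively, where θ̌₂ = (β·β)⁻¹ (β·α); in particular the discriminant (β·β)(τ² − α·α) + (α·β)² is nonnegative under these hypotheses. -/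
/-- **Corollary 2.** Assume `β ≠ 0` and `τ ≥ τ̌₂ = ⨅ θ, ‖α − θ·β‖₂`. Then the
discriminant `(β·β)(τ² − α·α) + (α·β)²` is nonnegative, and the minimum and maximum elements
of `{θ : ‖α − θ·β‖₂ ≤ τ}` are `θ̌₂ ∓ (β·β)⁻¹·√((β·β)(τ² − α·α) + (α·β)²)`, where
`θ̌₂ = (β·β)⁻¹ (β·α)`. -/
theorem closed_form_L2_bounds
    {d : ℕ} (hd : 1 ≤ d) (α β : Fin d → ℝ) (hβ : β ≠ 0) (τ : ℝ)
    (hτ : (⨅ θ : ℝ, Real.sqrt (∑ i, (α i - θ * β i) ^ 2)) ≤ τ) :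
    0 ≤ (∑ i, β i * β i) * (τ ^ 2 - ∑ i, α i * α i) + (∑ i, α i * β i) ^ 2 ∧
    IsLeast {θ : ℝ | Real.sqrt (∑ i, (α i - θ * β i) ^ 2) ≤ τ}
      ((∑ i, β i * β i)⁻¹ * (∑ i, β i * α i) -
        (∑ i, β i * β i)⁻¹ *
          Real.sqrt ((∑ i, β i * β i) * (τ ^ 2 - ∑ i, α i * α i) + (∑ i, α i * β i) ^ 2)) ∧
    IsGreatest {θ : ℝ | Real.sqrt (∑ i, (α i - θ * β i) ^ 2) ≤ τ}
      ((∑ i, β i * β i)⁻¹ * (∑ i, β i * α i) +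
        (∑ i, β i * β i)⁻¹ *
          Real.sqrt ((∑ i, β i * β i) * (τ ^ 2 - ∑ i, α i * α i) + (∑ i, α i * β i) ^ 2)) := by
  have hCeq : (∑ i, β i * α i) = ∑ i, α i * β i :=
    Finset.sum_congr rfl fun i _ => mul_comm _ _
  rw [hCeq]
  set B := ∑ i, β i * β i with hB
  set A := ∑ i, α i * α i with hA
  set C := ∑ i, α i * β i with hC
  have hBpos : 0 < B := by
    obtain ⟨i, hi⟩ := Function.ne_iff.mp hβ
    exact Finset.sum_pos' (fun j _ => mul_self_nonneg _)
      ⟨i, Finset.mem_univ i, mul_self_pos.mpr hi⟩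
  have hBne : B ≠ 0 := hBpos.ne'
  have key : ∀ θ : ℝ, ∑ i, (α i - θ * β i) ^ 2 = A - 2 * θ * C + θ ^ 2 * B := by
    intro θ
    rw [hA, hC, hB, Finset.mul_sum, Finset.mul_sum, ← Finset.sum_sub_distrib,
      ← Finset.sum_add_distrib]
    exact Finset.sum_congr rfl fun i _ => by ring
  have fnn : ∀ θ : ℝ, (0:ℝ) ≤ ∑ i, (α i - θ * β i) ^ 2 :=
    fun θ => Finset.sum_nonneg fun i _ => sq_nonneg _
  -- minimum value of the quadratic
  have h0 : 0 ≤ A - C ^ 2 / B := by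
    have h := fnn (C / B)
    rw [key] at h
    have : A - 2 * (C / B) * C + (C / B) ^ 2 * B = A - C ^ 2 / B := by
      field_simp; ring
    linarith [this ▸ h]
  have hdiv : C ^ 2 / B * B = C ^ 2 := div_mul_cancel₀ _ hBne
  have hmin : Real.sqrt (A - C ^ 2 / B) ≤ τ := by
    refine le_trans (le_ciInf fun θ => Real.sqrt_le_sqrt ?_) hτ
    rw [key]
    nlinarith [sq_nonneg (θ * B - C), hBpos, hdiv]
  have hτ0 : 0 ≤ τ := le_trans (Real.sqrt_nonneg _) hmin
  have hτ2 : A - C ^ 2 / B ≤ τ ^ 2 := by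
    nlinarith [Real.sq_sqrt h0, Real.sqrt_nonneg (A - C ^ 2 / B)]
  set D := B * (τ ^ 2 - A) + C ^ 2 with hD
  have hD0 : 0 ≤ D := by
    rw [hD]; nlinarith [hτ2, hBpos, hdiv]
  have sqD : Real.sqrt D ^ 2 = D := Real.sq_sqrt hD0
  -- membership characterization
  have mem_iff : ∀ θ : ℝ, (Real.sqrt (∑ i, (α i - θ * β i) ^ 2) ≤ τ) ↔
      (B * θ - C) ^ 2 ≤ D := by
    intro θ
    constructor
    · intro h
      have hsq : ∑ i, (α i - θ * β i) ^ 2 ≤ τ ^ 2 := by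
        nlinarith [Real.sq_sqrt (fnn θ), Real.sqrt_nonneg (∑ i, (α i - θ * β i) ^ 2)]
      rw [key] at hsq
      nlinarith [hBpos]
    · intro h
      have hsq : ∑ i, (α i - θ * β i) ^ 2 ≤ τ ^ 2 := by
        rw [key]; nlinarith [hBpos]
      calc Real.sqrt (∑ i, (α i - θ * β i) ^ 2) ≤ Real.sqrt (τ ^ 2) :=
            Real.sqrt_le_sqrt hsq
        _ = τ := Real.sqrt_sq hτ0
  refine ⟨hD0, ⟨?_, ?_⟩, ⟨?_, ?_⟩⟩
  · show Real.sqrt _ ≤ τ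
    rw [mem_iff]
    have : B * (B⁻¹ * C - B⁻¹ * Real.sqrt D) - C = -Real.sqrt D := by
      linear_combination (C - Real.sqrt D) * mul_inv_cancel₀ hBne
    rw [this, neg_sq, sqD]
  · intro θ hθ
    have h := (mem_iff θ).mp hθ
    have habs : |B * θ - C| ≤ Real.sqrt D := by
      rw [← Real.sqrt_sq_eq_abs]
      exact Real.sqrt_le_sqrt h
    have h1 : -Real.sqrt D ≤ B * θ - C := (abs_le.mp habs).1
    have hident : B⁻¹ * (B * θ - C) = θ - B⁻¹ * C := by
      linear_combination θ * inv_mul_cancel₀ hBne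
    have h1' := mul_le_mul_of_nonneg_left h1 (inv_pos.mpr hBpos).le
    rw [hident, mul_neg] at h1'
    linarith
  · show Real.sqrt _ ≤ τ
    rw [mem_iff]
    have : B * (B⁻¹ * C + B⁻¹ * Real.sqrt D) - C = Real.sqrt D := by
      linear_combination (C + Real.sqrt D) * mul_inv_cancel₀ hBne
    rw [this, sqD]
  · intro θ hθ
    have h := (mem_iff θ).mp hθ
    have habs : |B * θ - C| ≤ Real.sqrt D := by
      rw [← Real.sqrt_sq_eq_abs]
      exact Real.sqrt_le_sqrt h
    have h2 : B * θ - C ≤ Real.sqrt D := (abs_le.mp habs).2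
    have hident : B⁻¹ * (B * θ - C) = θ - B⁻¹ * C := by
      linear_combination θ * inv_mul_cancel₀ hBne
    have h2' := mul_le_mul_of_nonneg_left h2 (inv_pos.mpr hBpos).le
    rw [hident] at h2'
    linarith
end
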